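/- arXiv:1603.08362 — 2 statements merged into one kernel-verified Lean document; each statement's English description precedes it below -/
import Mathlib

section
/- Let δ₀ ∈ S* ∩ δ with η ∈ T_{<δ₀}, and S ⊆ S* ∩ δ tenuous. Then the restriction of p*_{η,δ,S} to levels below δ₀ equals p*_{η,δ₀,S∩δ₀}: p*_{η,δ,S} ∩ T_{<δ₀} = p*_{η,δ₀,S∩δ₀}. -/
open Set Ordinal

namespace RRF

/-- `C` is a closed unbounded (club) subset of the ordinal `δ`. -/
def ClubIn (C : Set Ordinal) (δ : Ordinal) : Prop :=
  (∀ α < δ, ∃ β ∈ C, α < β ∧ β < δ) ∧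
  (∀ α, 0 < α → α < δ → (∀ β < α, ∃ γ ∈ C, β < γ ∧ γ < α) → α ∈ C)

/-- `S` is stationary in `δ`: it meets every club of `δ`. -/
def StatIn (S : Set Ordinal) (δ : Ordinal) : Prop :=
  ∀ C, ClubIn C δ → (S ∩ C).Nonempty

/-- `S` is tenuous (nowhere stationary): for every ordinal `δ` of
uncountable cofinality, `S ∩ δ` is not stationary in `δ`. -/
def Tenuous (S : Set Ordinal) : Prop :=
  ∀ δ : Ordinal, Cardinal.aleph0 < δ.cof → ¬ StatIn (S ∩ Iio δ) δ

end RRF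

namespace RRF

/-- A node: a padded sequence of ordinals, given by its length together with a
function which is `0` from the length onwards. -/
abbrev Node : Type 1 := Ordinal × (Ordinal → Ordinal)

namespace Node

/-- The length of a node. -/
def lg (η : Node) : Ordinal := η.1

/-- Restriction of a node to length `β`. -/
noncomputable def restrict (η : Node) (β : Ordinal) : Node :=
  (min β η.1, fun ε => if ε < min β η.1 then η.2 ε else 0)

/-- `η ⊴ ν` : `η` is an initial segment of `ν`. -/
def Below (η ν : Node) : Prop := η.1 ≤ ν.1 ∧ ∀ ε < η.1, η.2 ε = ν.2 ε

/-- The empty sequence. -/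
def emptyNode : Node := (0, fun _ => 0)

/-- `η⌢⟨j⟩` : the immediate successor of `η` with last value `j`. -/
noncomputable def ext (η : Node) (j : Ordinal) : Node :=
  (η.1 + 1, fun ε => if ε < η.1 then η.2 ε else if ε = η.1 then j else 0)

end Node

/-- `η` is a genuine (padded) sequence with `η(ε) < θ ε` for `ε < lg η`. -/
def IsSeq (θ : Ordinal → Cardinal) (η : Node) : Prop :=
  (∀ ε < η.1, η.2 ε < (θ ε).ord) ∧ ∀ ε, ¬ ε < η.1 → η.2 ε = 0

/-- `T_{<δ}` : the full tree of sequences of length `< δ`. -/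
def Ttree (θ : Ordinal → Cardinal) (δ : Ordinal) : Set Node :=
  {η | η.1 < δ ∧ IsSeq θ η}

/-- `T_ε` : the `ε`-th level of the full tree. -/
def Level (θ : Ordinal → Cardinal) (ε : Ordinal) : Set Node :=
  {η | η.1 = ε ∧ IsSeq θ η}

/-- `lim_δ(u)` : length-`δ` sequences all of whose proper restrictions lie in `u`. -/
def limNodes (θ : Ordinal → Cardinal) (δ : Ordinal) (u : Set Node) : Set Node :=
  {ν | ν.1 = δ ∧ IsSeq θ ν ∧ ∀ β < δ, ν.restrict β ∈ u}

end RRF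

namespace RRF

/-- `p^{[η]}` : the nodes of `p` comparable with `η` which extend `η` or are
initial segments of it. -/
def restrTree (p : Set Node) (η : Node) : Set Node :=
  {ρ ∈ p | Node.Below η ρ ∨ Node.Below ρ η}

/-- `η` is the trunk of `p` : it is comparable with every node of `p` and is
`⊴`-maximal with this property. -/
def IsTrunk (p : Set Node) (η : Node) : Prop :=
  η ∈ p ∧ (∀ ν ∈ p, Node.Below ν η ∨ Node.Below η ν) ∧
    ∀ η' ∈ p, (∀ ν ∈ p, Node.Below ν η' ∨ Node.Below η' ν) → Node.Below η' η

/-- `p` is a tree: nonempty and closed under restrictions. -/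
def IsTree (p : Set Node) : Prop :=
  p.Nonempty ∧ ∀ η ∈ p, ∀ β ≤ η.1, η.restrict β ∈ p

/-- `S_p` : the set of pruning levels of `p` below `δ` — limit levels `δ₁ < δ`
at which some node has all proper restrictions in `p` but is itself not in `p`. -/
def pruneSet (θ : Ordinal → Cardinal) (δ : Ordinal) (p : Set Node) : Set Ordinal :=
  {δ₁ | δ₁ < δ ∧ Order.IsSuccLimit δ₁ ∧ ∃ η ∈ Level θ δ₁, η ∉ p ∧ ∀ β < δ₁, η.restrict β ∈ p}

/-- `p` is a condition of the forcing `Q⁰_δ`. -/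
structure IsCond0 (θ : Ordinal → Cardinal) (Sstar : Set Ordinal) (δ : Ordinal)
    (p : Set Node) : Prop where
  subset : p ⊆ Ttree θ δ
  tree : IsTree p
  trunk : ∃ η, IsTrunk p η
  levels : ∀ η ∈ p, ∀ β, η.1 ≤ β → β < δ → ∃ ν ∈ p, ν.1 = β ∧ Node.Below η ν
  branches : ∀ η ∈ p, ∃ ν ∈ limNodes θ δ p, Node.Below η ν
  fullSucc : ∀ t, IsTrunk p t → ∀ η ∈ p, Node.Below t η →
      ∀ j < ((θ η.1).ord), η.ext j ∈ p
  pruneSub : pruneSet θ δ p ⊆ Sstar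
  pruneTen : Tenuous (pruneSet θ δ p)
  pruneGt : ∀ t, IsTrunk p t → ∀ δ₁ ∈ pruneSet θ δ p, t.1 < δ₁

/-- Compatibility in `Q⁰_δ` (order is reverse inclusion). -/
def Compat0 (θ : Ordinal → Cardinal) (Sstar : Set Ordinal) (δ : Ordinal)
    (p q : Set Node) : Prop :=
  ∃ r, IsCond0 θ Sstar δ r ∧ r ⊆ p ∧ r ⊆ q

/-- Membership in `Ξ_δ` for a family `⟨q_η : η ∈ Λ⟩`. -/
structure IsXi (θ : Ordinal → Cardinal) (Sstar : Set Ordinal) (δ : Ordinal)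
    (Λ : Set Node) (q : Node → Set Node) : Prop where
  sub : Λ ⊆ Ttree θ δ
  cond : ∀ η ∈ Λ, IsCond0 θ Sstar δ (q η)
  trunk : ∀ η ∈ Λ, IsTrunk (q η) η
  anti : ∀ η ∈ Λ, ∀ ν ∈ Λ, η ≠ ν → η ∉ q ν ∨ ν ∉ q η
  union : IsCond0 θ Sstar δ (⋃ η ∈ Λ, q η)

/-- The coder of `⟨q_η : η ∈ Λ⟩`. -/
def coder (Λ : Set Node) (q : Node → Set Node) : Set (Node × Node) :=
  {x | x.1 ∈ Λ ∧ x.2 ∈ q x.1}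

end RRF

namespace RRF

-- The recursively defined condition `p*_{η,δ,S}`, relative to abstract
-- "successful level" data `succl`, `rst` (= `r*_δ`), `Λst` (= `Λ*_δ`) and
-- `qst` (= `⟨q*_{δ,η'}⟩`).
open Classical in
noncomputable def pstar (θ : Ordinal → Cardinal) (succl : Ordinal → Prop)
    (rst : Ordinal → Set Node) (Λst : Ordinal → Set Node)
    (qst : Ordinal → Node → Set Node) :
    Ordinal → Node → Set Ordinal → Set Node :=
  WellFounded.fix (wellFounded_lt)
    (fun δ rec η S =>
      if sSup S ≤ η.1 then
        -- case (a): `(T_{<δ})^{[η]}`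
        restrTree (Ttree θ δ) η
      else if _hmem : sSup S ∈ S then
        if hlt : sSup S < δ then
          if succl (sSup S) then
            -- case (d): last element `δ₁ = sSup S` is successful
            {ν ∈ Ttree θ δ |
              (ν.1 < sSup S ∧ ν ∈ rec (sSup S) hlt η (S ∩ Set.Iio (sSup S))) ∨
              (sSup S ≤ ν.1 ∧
                ν.restrict (sSup S) ∈
                  limNodes θ (sSup S) (rec (sSup S) hlt η (S ∩ Set.Iio (sSup S))) ∧
                (ν.restrict (sSup S) ∈ limNodes θ (sSup S) (rst (sSup S)) →
                  ∃ η' ∈ Λst (sSup S),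
                    ν.restrict (sSup S) ∈ limNodes θ (sSup S) (qst (sSup S) η')))}
          else
            -- case (c): last element `δ₁ = sSup S` is not successful
            {ν ∈ Ttree θ δ |
              (ν.1 < sSup S ∧ ν ∈ rec (sSup S) hlt η (S ∩ Set.Iio (sSup S))) ∨
              (sSup S ≤ ν.1 ∧
                ν.restrict (sSup S) ∈
                  limNodes θ (sSup S) (rec (sSup S) hlt η (S ∩ Set.Iio (sSup S))))}
        else ∅
      else
        -- case (b): `S` unbounded above `lg η` with no last element
        {ν ∈ Ttree θ δ |
          Node.Below ν η ∨
          (Node.Below η ν ∧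
            ((∃ δ₁, ∃ h : δ₁ < δ, δ₁ ∈ S ∧ ν.1 < δ₁ ∧
                ν ∈ rec δ₁ h η (S ∩ Set.Iio δ₁)) ∨
             (sSup S ≤ ν.1 ∧ ∀ δ₁, ∀ h : δ₁ < δ, δ₁ ∈ S → η.1 < δ₁ →
                ∀ ζ < δ₁, ν.restrict ζ ∈ rec δ₁ h η (S ∩ Set.Iio δ₁))))})

/-- Membership in the main forcing `Q_δ`. -/
def IsCondQ (θ : Ordinal → Cardinal) (succl : Ordinal → Prop)
    (rst Λst : Ordinal → Set Node) (qst : Ordinal → Node → Set Node)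
    (Sstar : Set Ordinal) (δ : Ordinal) (p : Set Node) : Prop :=
  ∃ η ∈ Ttree θ δ, ∃ S, S ⊆ Sstar ∩ Set.Iio δ ∧ Tenuous S ∧
    p = pstar θ succl rst Λst qst δ η S

/-- Membership in the forcing `Q'_δ`. -/
def IsCondQ' (θ : Ordinal → Cardinal) (succl : Ordinal → Prop)
    (rst Λst : Ordinal → Set Node) (qst : Ordinal → Node → Set Node)
    (Sstar : Set Ordinal) (δ : Ordinal) (p : Set Node) : Prop :=
  IsCond0 θ Sstar δ p ∧
  ∀ δ₁ ∈ Sstar, δ₁ < δ → (∀ t, IsTrunk p t → t.1 < δ₁) →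
    IsCondQ θ succl rst Λst qst Sstar δ₁ (p ∩ Ttree θ δ₁)

end RRF

namespace RRF

section Aux

variable (θ : Ordinal → Cardinal) (succl : Ordinal → Prop)
    (rst Λst : Ordinal → Set Node) (qst : Ordinal → Node → Set Node)

open Classical in
noncomputable def pstarF (δ : Ordinal)
    (rec : ∀ δ' : Ordinal, δ' < δ → Node → Set Ordinal → Set Node)
    (η : Node) (S : Set Ordinal) : Set Node :=
      if sSup S ≤ η.1 then
        restrTree (Ttree θ δ) η
      else if _hmem : sSup S ∈ S then
        if hlt : sSup S < δ then
          if succl (sSup S) then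
            {ν ∈ Ttree θ δ |
              (ν.1 < sSup S ∧ ν ∈ rec (sSup S) hlt η (S ∩ Set.Iio (sSup S))) ∨
              (sSup S ≤ ν.1 ∧
                ν.restrict (sSup S) ∈
                  limNodes θ (sSup S) (rec (sSup S) hlt η (S ∩ Set.Iio (sSup S))) ∧
                (ν.restrict (sSup S) ∈ limNodes θ (sSup S) (rst (sSup S)) →
                  ∃ η' ∈ Λst (sSup S),
                    ν.restrict (sSup S) ∈ limNodes θ (sSup S) (qst (sSup S) η')))}
          else
            {ν ∈ Ttree θ δ |
              (ν.1 < sSup S ∧ ν ∈ rec (sSup S) hlt η (S ∩ Set.Iio (sSup S))) ∨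
              (sSup S ≤ ν.1 ∧
                ν.restrict (sSup S) ∈
                  limNodes θ (sSup S) (rec (sSup S) hlt η (S ∩ Set.Iio (sSup S))))}
        else ∅
      else
        {ν ∈ Ttree θ δ |
          Node.Below ν η ∨
          (Node.Below η ν ∧
            ((∃ δ₁, ∃ h : δ₁ < δ, δ₁ ∈ S ∧ ν.1 < δ₁ ∧
                ν ∈ rec δ₁ h η (S ∩ Set.Iio δ₁)) ∨
             (sSup S ≤ ν.1 ∧ ∀ δ₁, ∀ h : δ₁ < δ, δ₁ ∈ S → η.1 < δ₁ →
                ∀ ζ < δ₁, ν.restrict ζ ∈ rec δ₁ h η (S ∩ Set.Iio δ₁))))}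

lemma pstar_eq (δ : Ordinal) (η : Node) (S : Set Ordinal) :
    pstar θ succl rst Λst qst δ η S
      = pstarF θ succl rst Λst qst δ
          (fun δ' _ => pstar θ succl rst Λst qst δ') η S := by
  unfold pstar
  rw [WellFounded.fix_eq]
  rfl

end Aux

section Aux2

variable (θ : Ordinal → Cardinal) (succl : Ordinal → Prop)
    (rst Λst : Ordinal → Set Node) (qst : Ordinal → Node → Set Node)

lemma sSup_mono' {S T : Set Ordinal} (hT : BddAbove T) (h : S ⊆ T) :
    sSup S ≤ sSup T := by
  rcases S.eq_empty_or_nonempty with rfl | hne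
  · rw [csSup_empty]; exact bot_le
  · exact csSup_le_csSup hT hne h

lemma pstar_case_a {δ : Ordinal} {η : Node} {S : Set Ordinal} (h : sSup S ≤ η.1) :
    pstar θ succl rst Λst qst δ η S = restrTree (Ttree θ δ) η := by
  rw [pstar_eq]; unfold pstarF; rw [if_pos h]

lemma pstar_case_cd {δ : Ordinal} {η : Node} {S : Set Ordinal}
    (h1 : ¬ sSup S ≤ η.1) (h2 : sSup S ∈ S) (h3 : sSup S < δ) :
    pstar θ succl rst Λst qst δ η S =
      {ν ∈ Ttree θ δ |
        (ν.1 < sSup S ∧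
          ν ∈ pstar θ succl rst Λst qst (sSup S) η (S ∩ Set.Iio (sSup S))) ∨
        (sSup S ≤ ν.1 ∧
          ν.restrict (sSup S) ∈
            limNodes θ (sSup S)
              (pstar θ succl rst Λst qst (sSup S) η (S ∩ Set.Iio (sSup S))) ∧
          (succl (sSup S) →
            ν.restrict (sSup S) ∈ limNodes θ (sSup S) (rst (sSup S)) →
            ∃ η' ∈ Λst (sSup S),
              ν.restrict (sSup S) ∈ limNodes θ (sSup S) (qst (sSup S) η')))} := by
  classical
  rw [pstar_eq]; unfold pstarF
  rw [if_neg h1, dif_pos h2, dif_pos h3]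
  by_cases hs : succl (sSup S)
  · rw [if_pos hs]; ext ν
    simp only [Set.mem_setOf_eq]
    constructor
    · rintro ⟨hT, h | ⟨ha, hb, hc⟩⟩
      exacts [⟨hT, Or.inl h⟩, ⟨hT, Or.inr ⟨ha, hb, fun _ => hc⟩⟩]
    · rintro ⟨hT, h | ⟨ha, hb, hc⟩⟩
      exacts [⟨hT, Or.inl h⟩, ⟨hT, Or.inr ⟨ha, hb, hc hs⟩⟩]
  · rw [if_neg hs]; ext ν
    simp only [Set.mem_setOf_eq]
    constructor
    · rintro ⟨hT, h | ⟨ha, hb⟩⟩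
      exacts [⟨hT, Or.inl h⟩, ⟨hT, Or.inr ⟨ha, hb, fun hs' => absurd hs' hs⟩⟩]
    · rintro ⟨hT, h | ⟨ha, hb, _⟩⟩
      exacts [⟨hT, Or.inl h⟩, ⟨hT, Or.inr ⟨ha, hb⟩⟩]

lemma pstar_case_b {δ : Ordinal} {η : Node} {S : Set Ordinal}
    (h1 : ¬ sSup S ≤ η.1) (h2 : sSup S ∉ S) :
    pstar θ succl rst Λst qst δ η S =
      {ν ∈ Ttree θ δ |
        Node.Below ν η ∨
        (Node.Below η ν ∧
          ((∃ δ₁, ∃ _h : δ₁ < δ, δ₁ ∈ S ∧ ν.1 < δ₁ ∧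
              ν ∈ pstar θ succl rst Λst qst δ₁ η (S ∩ Set.Iio δ₁)) ∨
           (sSup S ≤ ν.1 ∧ ∀ δ₁, δ₁ < δ → δ₁ ∈ S → η.1 < δ₁ →
              ∀ ζ < δ₁,
                ν.restrict ζ ∈ pstar θ succl rst Λst qst δ₁ η (S ∩ Set.Iio δ₁))))} := by
  rw [pstar_eq]; unfold pstarF
  rw [if_neg h1, dif_neg h2]

lemma pstar_subset_Ttree (δ : Ordinal) (η : Node) (S : Set Ordinal) :
    pstar θ succl rst Λst qst δ η S ⊆ Ttree θ δ := by
  intro ν hν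
  rw [pstar_eq] at hν; unfold pstarF at hν
  split_ifs at hν with h1 h2 h3 h4
  · exact hν.1
  · exact hν.1
  · exact hν.1
  · exact absurd hν (Set.notMem_empty ν)
  · exact hν.1

lemma below_of_restrict_lim {θ : Ordinal → Cardinal} {δ₁ : Ordinal} {R : Set Node}
    {η ν : Node} (hcmp : ∀ ρ ∈ R, Node.Below ρ η ∨ Node.Below η ρ)
    (hlen : η.1 < δ₁) (hν1 : δ₁ ≤ ν.1)
    (hlim : ν.restrict δ₁ ∈ limNodes θ δ₁ R) : Node.Below η ν := by
  have hρmem : (ν.restrict δ₁).restrict η.1 ∈ R := hlim.2.2 η.1 hlen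
  have hμ1 : (ν.restrict δ₁).1 = δ₁ := min_eq_left hν1
  have hρ1 : ((ν.restrict δ₁).restrict η.1).1 = η.1 := by
    show min η.1 (ν.restrict δ₁).1 = η.1
    rw [hμ1]; exact min_eq_left hlen.le
  have hρval : ∀ ε < η.1, ((ν.restrict δ₁).restrict η.1).2 ε = ν.2 ε := by
    intro ε hε
    show (if ε < min η.1 (ν.restrict δ₁).1 then (ν.restrict δ₁).2 ε else 0) = ν.2 ε
    rw [hμ1, if_pos (lt_min hε (hε.trans hlen))]
    show (if ε < min δ₁ ν.1 then ν.2 ε else 0) = ν.2 ε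
    rw [if_pos (lt_min (hε.trans hlen) (lt_of_lt_of_le (hε.trans hlen) hν1))]
  have heq : ∀ ε < η.1, η.2 ε = ν.2 ε := by
    intro ε hε
    rcases hcmp _ hρmem with h | h
    · rw [← hρval ε hε]
      exact (h.2 ε (by rw [hρ1]; exact hε)).symm
    · rw [← hρval ε hε]
      exact h.2 ε hε
  exact ⟨le_of_lt (lt_of_lt_of_le hlen hν1), heq⟩

lemma pstar_comp (δ : Ordinal) : ∀ (η : Node) (S : Set Ordinal) (ν : Node),
    ν ∈ pstar θ succl rst Λst qst δ η S →
    Node.Below ν η ∨ Node.Below η ν := by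
  induction δ using Ordinal.induction with
  | h δ IH =>
  intro η S ν hν
  rw [pstar_eq] at hν; unfold pstarF at hν
  split_ifs at hν with h1 h2 h3 h4
  · exact hν.2.symm
  · rcases hν.2 with ⟨_, hm⟩ | ⟨hge, hlim, _⟩
    · exact IH _ h3 η _ ν hm
    · exact Or.inr (below_of_restrict_lim (fun ρ hρ => IH _ h3 η _ ρ hρ)
        (not_le.mp h1) hge hlim)
  · rcases hν.2 with ⟨_, hm⟩ | ⟨hge, hlim⟩
    · exact IH _ h3 η _ ν hm
    · exact Or.inr (below_of_restrict_lim (fun ρ hρ => IH _ h3 η _ ρ hρ)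
        (not_le.mp h1) hge hlim)
  · exact absurd hν (Set.notMem_empty ν)
  · rcases hν.2 with h | ⟨h, _⟩
    · exact Or.inl h
    · exact Or.inr h

lemma pstar_mem_of_below (δ : Ordinal) : ∀ (η : Node) (S : Set Ordinal) (ν : Node),
    (sSup S ∈ S → sSup S < δ) → ν ∈ Ttree θ δ → Node.Below ν η →
    ν ∈ pstar θ succl rst Λst qst δ η S := by
  induction δ using Ordinal.induction with
  | h δ IH =>
  intro η S ν hSd hν hb
  rw [pstar_eq]; unfold pstarF
  split_ifs with h1 h2 h3 h4
  · exact ⟨hν, Or.inr hb⟩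
  · refine ⟨hν, Or.inl ⟨lt_of_le_of_lt hb.1 (not_le.mp h1), ?_⟩⟩
    exact IH _ h3 η _ ν (fun hm => hm.2)
      ⟨lt_of_le_of_lt hb.1 (not_le.mp h1), hν.2⟩ hb
  · refine ⟨hν, Or.inl ⟨lt_of_le_of_lt hb.1 (not_le.mp h1), ?_⟩⟩
    exact IH _ h3 η _ ν (fun hm => hm.2)
      ⟨lt_of_le_of_lt hb.1 (not_le.mp h1), hν.2⟩ hb
  · exact absurd (hSd h2) h3
  · exact ⟨hν, Or.inl hb⟩

lemma pstar_restrict (δ : Ordinal) : ∀ δ₀ < δ, ∀ (η : Node) (S : Set Ordinal),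
    η.1 < δ₀ → S ⊆ Set.Iio δ →
    pstar θ succl rst Λst qst δ η S ∩ Ttree θ δ₀
      = pstar θ succl rst Λst qst δ₀ η (S ∩ Set.Iio δ₀) := by
  induction δ using Ordinal.induction with
  | h δ IH =>
  intro δ₀ hδ₀ η S hη hS
  have hbdd : BddAbove S := ⟨δ, fun x hx => le_of_lt (hS hx)⟩
  have hsubT : Ttree θ δ₀ ⊆ Ttree θ δ := fun ν hν => ⟨hν.1.trans hδ₀, hν.2⟩
  have transfer : ∀ δ₁ : Ordinal, δ₁ < δ → η.1 < δ₁ → ∀ ν : Node,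
      ν ∈ Ttree θ δ₀ → ν.1 < δ₁ →
      (ν ∈ pstar θ succl rst Λst qst δ₁ η (S ∩ Set.Iio δ₁) ↔
       ν ∈ pstar θ succl rst Λst qst δ₀ η (S ∩ Set.Iio δ₀)) := by
    intro δ₁ h1 hη1 ν hν0 hν1
    rcases lt_trichotomy δ₁ δ₀ with hlt | rfl | hlt
    · have hIH := IH δ₀ hδ₀ δ₁ hlt η (S ∩ Set.Iio δ₀) hη1 (fun x hx => hx.2)
      have hset : S ∩ Set.Iio δ₀ ∩ Set.Iio δ₁ = S ∩ Set.Iio δ₁ := by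
        rw [Set.inter_assoc, Set.Iio_inter_Iio, min_eq_right hlt.le]
      rw [hset] at hIH
      constructor
      · intro hm; rw [← hIH] at hm; exact hm.1
      · intro hm; rw [← hIH]; exact ⟨hm, ⟨hν1, hν0.2⟩⟩
    · exact Iff.rfl
    · have hIH := IH δ₁ h1 δ₀ hlt η (S ∩ Set.Iio δ₁) hη (fun x hx => hx.2)
      have hset : S ∩ Set.Iio δ₁ ∩ Set.Iio δ₀ = S ∩ Set.Iio δ₀ := by
        rw [Set.inter_assoc, Set.Iio_inter_Iio, min_eq_right hlt.le]
      rw [hset] at hIH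
      constructor
      · intro hm; rw [← hIH]; exact ⟨hm, hν0⟩
      · intro hm; rw [← hIH] at hm; exact hm.1
  by_cases ha : sSup S ≤ η.1
  · have ha0 : sSup (S ∩ Set.Iio δ₀) ≤ η.1 :=
      le_trans (sSup_mono' hbdd Set.inter_subset_left) ha
    rw [pstar_case_a θ succl rst Λst qst ha, pstar_case_a θ succl rst Λst qst ha0]
    ext ν
    simp only [restrTree, Set.mem_inter_iff, Set.mem_setOf_eq]
    constructor
    · rintro ⟨⟨_, hc⟩, hT0⟩; exact ⟨hT0, hc⟩
    · rintro ⟨hT0, hc⟩; exact ⟨⟨hsubT hT0, hc⟩, hT0⟩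
  · by_cases hb : sSup S ∈ S
    · have hσδ : sSup S < δ := hS hb
      rcases lt_trichotomy (sSup S) δ₀ with hcase | hcase | hcase
      · have hS0 : S ⊆ Set.Iio δ₀ :=
          fun x hx => lt_of_le_of_lt (le_csSup hbdd hx) hcase
        have hSeq : S ∩ Set.Iio δ₀ = S := Set.inter_eq_left.mpr hS0
        rw [hSeq]
        rw [pstar_case_cd θ succl rst Λst qst ha hb hσδ,
            pstar_case_cd θ succl rst Λst qst ha hb hcase]
        ext ν
        simp only [Set.mem_inter_iff, Set.mem_setOf_eq]
        constructor
        · rintro ⟨⟨_, hc⟩, hT0⟩; exact ⟨hT0, hc⟩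
        · rintro ⟨hT0, hc⟩; exact ⟨⟨hsubT hT0, hc⟩, hT0⟩
      · rw [pstar_case_cd θ succl rst Λst qst ha hb hσδ]
        ext ν
        simp only [Set.mem_inter_iff, Set.mem_setOf_eq]
        constructor
        · rintro ⟨⟨hT, hc⟩, hT0⟩
          rcases hc with ⟨_, hm⟩ | ⟨hge, _⟩
          · rw [← hcase]; exact hm
          · have : δ₀ ≤ ν.1 := by rw [← hcase]; exact hge
            exact absurd hT0.1 (not_lt.mpr this)
        · intro hm
          have hm' : ν ∈ pstar θ succl rst Λst qst (sSup S) η (S ∩ Set.Iio (sSup S)) := by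
            rw [hcase]; exact hm
          have hT0 : ν ∈ Ttree θ δ₀ := by
            rw [← hcase]
            exact pstar_subset_Ttree θ succl rst Λst qst (sSup S) η _ hm'
          have hν1 : ν.1 < sSup S := by rw [hcase]; exact hT0.1
          exact ⟨⟨hsubT hT0, Or.inl ⟨hν1, hm'⟩⟩, hT0⟩
      · have hIH := IH (sSup S) hσδ δ₀ hcase η (S ∩ Set.Iio (sSup S)) hη
          (fun x hx => hx.2)
        have hset : S ∩ Set.Iio (sSup S) ∩ Set.Iio δ₀ = S ∩ Set.Iio δ₀ := by
          rw [Set.inter_assoc, Set.Iio_inter_Iio, min_eq_right hcase.le]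
        rw [hset] at hIH
        rw [pstar_case_cd θ succl rst Λst qst ha hb hσδ]
        ext ν
        simp only [Set.mem_inter_iff, Set.mem_setOf_eq]
        constructor
        · rintro ⟨⟨hT, hc⟩, hT0⟩
          rcases hc with ⟨_, hm⟩ | ⟨hge, _⟩
          · rw [← hIH]; exact ⟨hm, hT0⟩
          · exact absurd hge (not_le.mpr (hT0.1.trans hcase))
        · intro hm
          have hT0 : ν ∈ Ttree θ δ₀ :=
            pstar_subset_Ttree θ succl rst Λst qst δ₀ η _ hm
          have hm' : ν ∈ pstar θ succl rst Λst qst (sSup S) η (S ∩ Set.Iio (sSup S)) := by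
            rw [← hIH] at hm; exact hm.1
          exact ⟨⟨hsubT hT0, Or.inl ⟨hT0.1.trans hcase, hm'⟩⟩, hT0⟩
    · rw [pstar_case_b θ succl rst Λst qst ha hb]
      by_cases hex : ∃ δ₁ ∈ S, δ₀ ≤ δ₁
      · obtain ⟨δs, hδsS, hδsge⟩ := hex
        have hδsδ : δs < δ := hS hδsS
        have hσge : δ₀ ≤ sSup S := hδsge.trans (le_csSup hbdd hδsS)
        ext ν
        simp only [Set.mem_inter_iff, Set.mem_setOf_eq]
        constructor
        · rintro ⟨⟨hT, hc⟩, hT0⟩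
          rcases hc with hbel | ⟨hbel, hd⟩
          · exact pstar_mem_of_below θ succl rst Λst qst δ₀ η _ ν
              (fun hm => hm.2) hT0 hbel
          · rcases hd with ⟨δ₁, h1, hδ₁S, hν1, hm⟩ | ⟨hge, _⟩
            · exact (transfer δ₁ h1 (lt_of_le_of_lt hbel.1 hν1) ν hT0 hν1).mp hm
            · exact absurd (lt_of_lt_of_le hT0.1 hσge) (not_lt.mpr hge)
        · intro hm
          have hT0 : ν ∈ Ttree θ δ₀ :=
            pstar_subset_Ttree θ succl rst Λst qst δ₀ η _ hm
          rcases pstar_comp θ succl rst Λst qst δ₀ η _ ν hm with hbel | hbel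
          · exact ⟨⟨hsubT hT0, Or.inl hbel⟩, hT0⟩
          · refine ⟨⟨hsubT hT0, Or.inr ⟨hbel, Or.inl
              ⟨δs, hδsδ, hδsS, lt_of_lt_of_le hT0.1 hδsge, ?_⟩⟩⟩, hT0⟩
            exact (transfer δs hδsδ (lt_of_lt_of_le hη hδsge) ν hT0
              (lt_of_lt_of_le hT0.1 hδsge)).mpr hm
      · push_neg at hex
        have hS0 : S ⊆ Set.Iio δ₀ := fun x hx => hex x hx
        have hSeq : S ∩ Set.Iio δ₀ = S := Set.inter_eq_left.mpr hS0
        rw [hSeq]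
        rw [pstar_case_b θ succl rst Λst qst ha hb]
        ext ν
        simp only [Set.mem_inter_iff, Set.mem_setOf_eq]
        constructor
        · rintro ⟨⟨hT, hc⟩, hT0⟩
          refine ⟨hT0, ?_⟩
          rcases hc with hbel | ⟨hbel, hd⟩
          · exact Or.inl hbel
          · refine Or.inr ⟨hbel, ?_⟩
            rcases hd with ⟨δ₁, h1, hδ₁S, hν1, hm⟩ | ⟨hge, hall⟩
            · exact Or.inl ⟨δ₁, hex δ₁ hδ₁S, hδ₁S, hν1, hm⟩
            · exact Or.inr ⟨hge, fun δ₁ h1 hδ₁S hη1 ζ hζ =>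
                hall δ₁ (h1.trans hδ₀) hδ₁S hη1 ζ hζ⟩
        · rintro ⟨hT0, hc⟩
          refine ⟨⟨hsubT hT0, ?_⟩, hT0⟩
          rcases hc with hbel | ⟨hbel, hd⟩
          · exact Or.inl hbel
          · refine Or.inr ⟨hbel, ?_⟩
            rcases hd with ⟨δ₁, h1, hδ₁S, hν1, hm⟩ | ⟨hge, hall⟩
            · exact Or.inl ⟨δ₁, h1.trans hδ₀, hδ₁S, hν1, hm⟩
            · exact Or.inr ⟨hge, fun δ₁ h1 hδ₁S hη1 ζ hζ =>
                hall δ₁ (hex δ₁ hδ₁S) hδ₁S hη1 ζ hζ⟩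

end Aux2

/-- for `δ₀ ∈ S* ∩ δ` with `η ∈ T_{<δ₀}` and tenuous
`S ⊆ S* ∩ δ`, one has `p*_{η,δ,S} ∩ T_{<δ₀} = p*_{η,δ₀,S∩δ₀}`. -/
theorem stmt13 (lamc : Cardinal) (hinacc : lamc.IsInaccessible)
    (θ : Ordinal → Cardinal) (hθ : ∀ ε, 2 ≤ θ ε)
    (hθlt : ∀ ε < lamc.ord, (θ ε).ord < lamc.ord)
    (Sstar : Set Ordinal) (hSsub : Sstar ⊆ Set.Iio lamc.ord)
    (hSstat : StatIn Sstar lamc.ord)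
    (hSsl : ∀ δ ∈ Sstar, (Ordinal.card δ).IsStrongLimit ∧ (Ordinal.card δ).ord = δ)
    (hSθ : ∀ δ ∈ Sstar, ∀ ζ < δ, (θ ζ).ord < δ)
    (hrefl : ∀ ε < lamc.ord, StatIn (Sstar ∩ Set.Iio ε) ε →
      (Ordinal.card ε).IsInaccessible)
    (succl : Ordinal → Prop) (rst Λst : Ordinal → Set Node)
    (qst : Ordinal → Node → Set Node)
    (hsucc : ∀ δ₁, succl δ₁ → IsXi θ Sstar δ₁ (Λst δ₁) (qst δ₁) ∧
      rst δ₁ = ⋃ η ∈ Λst δ₁, qst δ₁ η)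
    (δ : Ordinal) (hδ : δ ∈ Sstar ∨ δ = lamc.ord)
    (δ₀ : Ordinal) (hδ₀ : δ₀ ∈ Sstar) (hlt : δ₀ < δ)
    (η : Node) (hη : η ∈ Ttree θ δ₀)
    (S : Set Ordinal) (hS : S ⊆ Sstar ∩ Set.Iio δ) (hten : Tenuous S) :
    pstar θ succl rst Λst qst δ η S ∩ Ttree θ δ₀ =
      pstar θ succl rst Λst qst δ₀ η (S ∩ Set.Iio δ₀) :=
  pstar_restrict θ succl rst Λst qst δ δ₀ hlt η S hη.1 (fun x hx => (hS hx).2)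

end RRF
end

section
/- Let δ ∈ S* ∪ {λ} and let p = p*_{η₁,δ,S₁}, q = p*_{η₂,δ,S₂} ∈ Q_δ with η₁ ⊴ η₂, tr(p) ∈ q and tr(q) ∈ p. Then p ∩ q = p*_{η₂,δ,S₁∪S₂} ∈ Q_δ; in particular two conditions of Q_δ are compatible if and only if each one's trunk belongs to the other. -/
open Set Ordinal

namespace RRF


open Node in
/-- The level-wise pruning condition used to characterize membership in `pstar`. -/
def Cnd (θ : Ordinal → Cardinal) (succl : Ordinal → Prop)
    (rst Λst : Ordinal → Set Node) (qst : Ordinal → Node → Set Node)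
    (ν : Node) (S : Set Ordinal) (η : Node) : Prop :=
  ∀ δ₁ ∈ S, η.1 < δ₁ → δ₁ ≤ ν.1 → succl δ₁ →
    ν.restrict δ₁ ∈ limNodes θ δ₁ (rst δ₁) →
    ∃ η' ∈ Λst δ₁, ν.restrict δ₁ ∈ limNodes θ δ₁ (qst δ₁ η')

section Aux

open Node

variable {θ : Ordinal → Cardinal} {succl : Ordinal → Prop}
  {rst Λst : Ordinal → Set Node} {qst : Ordinal → Node → Set Node}
  {Sstar : Set Ordinal}

theorem Node.restrict_fst (ν : Node) (β : Ordinal) : (ν.restrict β).1 = min β ν.1 := rfl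

theorem Node.below_refl (η : Node) : Below η η := ⟨le_rfl, fun _ _ => rfl⟩

theorem Node.below_trans {η ν ρ : Node} (h1 : Below η ν) (h2 : Below ν ρ) : Below η ρ :=
  ⟨h1.1.trans h2.1, fun ε hε => (h1.2 ε hε).trans (h2.2 ε (hε.trans_le h1.1))⟩

theorem isSeq_restrict {ν : Node} (h : IsSeq θ ν) (β : Ordinal) : IsSeq θ (ν.restrict β) := by
  constructor
  · intro ε hε
    rw [Node.restrict_fst] at hε
    have hε' : ε < ν.1 := lt_of_lt_of_le hε (min_le_right _ _)
    show (if ε < min β ν.1 then ν.2 ε else 0) < _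
    rw [if_pos hε]
    exact h.1 ε hε'
  · intro ε hε
    rw [Node.restrict_fst] at hε
    show (if ε < min β ν.1 then ν.2 ε else 0) = 0
    rw [if_neg hε]

theorem Node.restrict_restrict (ν : Node) {γ β : Ordinal} (h : γ ≤ β) :
    (ν.restrict β).restrict γ = ν.restrict γ := by
  have hm : min γ (min β ν.1) = min γ ν.1 := by
    rw [← min_assoc, min_eq_left h]
  show (min γ (min β ν.1), _) = (min γ ν.1, _)
  rw [Prod.mk.injEq]
  refine ⟨hm, funext fun ε => ?_⟩
  show (if ε < min γ (min β ν.1) then (ν.restrict β).2 ε else 0)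
      = (if ε < min γ ν.1 then ν.2 ε else 0)
  rw [hm]
  rcases lt_or_ge ε (min γ ν.1) with hε | hε
  · rw [if_pos hε, if_pos hε]
    show (if ε < min β ν.1 then ν.2 ε else 0) = ν.2 ε
    rw [if_pos (lt_min (lt_of_lt_of_le hε ((min_le_left _ _).trans h))
      (lt_of_lt_of_le hε (min_le_right _ _)))]
  · rw [if_neg (not_lt.2 hε), if_neg (not_lt.2 hε)]

theorem Node.below_restrict (ν : Node) (β : Ordinal) : Below (ν.restrict β) ν :=
  ⟨min_le_right _ _, fun ε hε => if_pos hε⟩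

theorem Node.restrict_below {η ν : Node} (h : Below η ν) {β : Ordinal}
    (hβ : min β ν.1 ≤ η.1) : Below (ν.restrict β) η := by
  refine ⟨hβ, fun ε hε => ?_⟩
  rw [Node.restrict_fst] at hε
  show (if ε < min β ν.1 then ν.2 ε else 0) = η.2 ε
  rw [if_pos hε]
  exact (h.2 ε (lt_of_lt_of_le hε hβ)).symm

theorem Node.below_restrict_of_le {η ν : Node} (h : Below η ν) {β : Ordinal}
    (hβ : η.1 ≤ β) : Below η (ν.restrict β) := by
  refine ⟨le_min hβ h.1, fun ε hε => ?_⟩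
  show η.2 ε = (if ε < min β ν.1 then ν.2 ε else 0)
  rw [if_pos (lt_of_lt_of_le hε (le_min hβ h.1))]
  exact h.2 ε hε

theorem Node.eq_restrict {η ν : Node} (hs : ∀ ε, ¬ ε < η.1 → η.2 ε = 0)
    (h : Below η ν) : η = ν.restrict η.1 := by
  have hm : min η.1 ν.1 = η.1 := min_eq_left h.1
  refine Prod.ext ?_ (funext fun ε => ?_)
  · exact ((Node.restrict_fst ν η.1).trans hm).symm
  · show η.2 ε = (if ε < min η.1 ν.1 then ν.2 ε else 0)
    rw [hm]
    rcases lt_or_ge ε η.1 with hε | hε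
    · rw [if_pos hε]; exact h.2 ε hε
    · rw [if_neg (not_lt.2 hε)]; exact hs ε (not_lt.2 hε)

theorem Node.restrict_eq_of_below {η ν : Node} (hs : ∀ ε, ¬ ε < η.1 → η.2 ε = 0)
    (h : Below η ν) {β : Ordinal} (hβ : β ≤ η.1) :
    η.restrict β = ν.restrict β := by
  conv_lhs => rw [Node.eq_restrict hs h]
  exact Node.restrict_restrict ν hβ

theorem Node.below_antisymm {η ν : Node} (hη : ∀ ε, ¬ ε < η.1 → η.2 ε = 0)
    (hν : ∀ ε, ¬ ε < ν.1 → ν.2 ε = 0) (h1 : Below η ν) (h2 : Below ν η) : η = ν := by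
  have hl : η.1 = ν.1 := le_antisymm h1.1 h2.1
  refine Prod.ext hl (funext fun ε => ?_)
  rcases lt_or_ge ε η.1 with hε | hε
  · exact h1.2 ε hε
  · rw [hη ε (not_lt.2 hε), hν ε (not_lt.2 (hl ▸ hε))]

theorem Node.below_or_below {η ρ ν : Node} (h1 : Below η ν) (h2 : Below ρ ν) :
    Below η ρ ∨ Below ρ η := by
  rcases le_total η.1 ρ.1 with h | h
  · exact Or.inl ⟨h, fun ε hε => (h1.2 ε hε).trans (h2.2 ε (lt_of_lt_of_le hε h)).symm⟩
  · exact Or.inr ⟨h, fun ε hε => (h2.2 ε hε).trans (h1.2 ε (lt_of_lt_of_le hε h)).symm⟩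

theorem Node.below_of_restrict {η ν : Node} {β : Ordinal} (hβ : min β ν.1 = η.1)
    (h : Below (ν.restrict β) η ∨ Below η (ν.restrict β)) : Below η ν := by
  have hlen : η.1 ≤ ν.1 := hβ ▸ min_le_right β ν.1
  refine ⟨hlen, fun ε hε => ?_⟩
  have hε' : ε < min β ν.1 := by rw [hβ]; exact hε
  have hε'' : ε < (ν.restrict β).1 := by rw [Node.restrict_fst, hβ]; exact hε
  have hv : (ν.restrict β).2 ε = ν.2 ε := if_pos hε'
  rcases h with h | h
  · exact ((h.2 ε hε'').symm.trans hv)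
  · exact (h.2 ε hε).trans hv

theorem Node.ext_fst (η : Node) (j : Ordinal) : (η.ext j).1 = η.1 + 1 := rfl

theorem Node.ext_snd_last (η : Node) (j : Ordinal) : (η.ext j).2 η.1 = j := by
  show (if η.1 < η.1 then η.2 η.1 else if η.1 = η.1 then j else 0) = j
  rw [if_neg (lt_irrefl _), if_pos rfl]

theorem Node.below_ext (η : Node) (j : Ordinal) : Below η (η.ext j) := by
  refine ⟨?_, fun ε hε => (if_pos hε).symm⟩
  exact le_of_lt (lt_of_lt_of_le (lt_add_one η.1) le_rfl)

end Aux


open Node Classical in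
theorem pstar_eq_s16 (θ : Ordinal → Cardinal) (succl : Ordinal → Prop)
    (rst Λst : Ordinal → Set Node) (qst : Ordinal → Node → Set Node)
    (δ : Ordinal) (η : Node) (S : Set Ordinal) :
    pstar θ succl rst Λst qst δ η S =
      if sSup S ≤ η.1 then
        restrTree (Ttree θ δ) η
      else if _hmem : sSup S ∈ S then
        if _hlt : sSup S < δ then
          if succl (sSup S) then
            {ν ∈ Ttree θ δ |
              (ν.1 < sSup S ∧
                ν ∈ pstar θ succl rst Λst qst (sSup S) η (S ∩ Set.Iio (sSup S))) ∨
              (sSup S ≤ ν.1 ∧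
                ν.restrict (sSup S) ∈
                  limNodes θ (sSup S)
                    (pstar θ succl rst Λst qst (sSup S) η (S ∩ Set.Iio (sSup S))) ∧
                (ν.restrict (sSup S) ∈ limNodes θ (sSup S) (rst (sSup S)) →
                  ∃ η' ∈ Λst (sSup S),
                    ν.restrict (sSup S) ∈ limNodes θ (sSup S) (qst (sSup S) η')))}
          else
            {ν ∈ Ttree θ δ |
              (ν.1 < sSup S ∧
                ν ∈ pstar θ succl rst Λst qst (sSup S) η (S ∩ Set.Iio (sSup S))) ∨
              (sSup S ≤ ν.1 ∧
                ν.restrict (sSup S) ∈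
                  limNodes θ (sSup S)
                    (pstar θ succl rst Λst qst (sSup S) η (S ∩ Set.Iio (sSup S))))}
        else ∅
      else
        {ν ∈ Ttree θ δ |
          Node.Below ν η ∨
          (Node.Below η ν ∧
            ((∃ δ₁, ∃ _h : δ₁ < δ, δ₁ ∈ S ∧ ν.1 < δ₁ ∧
                ν ∈ pstar θ succl rst Λst qst δ₁ η (S ∩ Set.Iio δ₁)) ∨
             (sSup S ≤ ν.1 ∧ ∀ δ₁, ∀ _h : δ₁ < δ, δ₁ ∈ S → η.1 < δ₁ →
                ∀ ζ < δ₁, ν.restrict ζ ∈ pstar θ succl rst Λst qst δ₁ η (S ∩ Set.Iio δ₁))))} := by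
  unfold pstar
  rw [WellFounded.fix_eq]


section Char

open Node

variable {θ : Ordinal → Cardinal} {succl : Ordinal → Prop}
  {rst Λst : Ordinal → Set Node} {qst : Ordinal → Node → Set Node}
  {Sstar : Set Ordinal}

theorem pstar_char (hlim : ∀ x ∈ Sstar, Order.IsSuccLimit x) :
    ∀ δ : Ordinal, ∀ η S, η ∈ Ttree θ δ → S ⊆ Sstar ∩ Set.Iio δ →
      pstar θ succl rst Λst qst δ η S =
        {ν ∈ Ttree θ δ |
          Below ν η ∨ (Below η ν ∧ Cnd θ succl rst Λst qst ν S η)} := by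
  intro δ
  induction δ using Ordinal.induction with
  | h δ IH =>
  intro η S hη hS
  have hbdd : BddAbove S := ⟨δ, fun x hx => le_of_lt (hS hx).2⟩
  rw [pstar_eq_s16]
  by_cases hsup : sSup S ≤ η.1
  · rw [if_pos hsup]
    ext ν
    simp only [restrTree, Set.mem_setOf_eq, Set.mem_sep_iff]
    constructor
    · rintro ⟨hT, hcmp | hcmp⟩
      · exact ⟨hT, Or.inr ⟨hcmp, fun δ₁ hδ₁ hgt _ _ _ =>
          absurd ((le_csSup hbdd hδ₁).trans hsup) (not_le.2 hgt)⟩⟩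
      · exact ⟨hT, Or.inl hcmp⟩
    · rintro ⟨hT, hcmp | ⟨hb, _⟩⟩
      · exact ⟨hT, Or.inr hcmp⟩
      · exact ⟨hT, Or.inl hb⟩
  rw [if_neg hsup]
  have hs' : η.1 < sSup S := not_le.1 hsup
  by_cases hmem : sSup S ∈ S
  · -- cases (c) and (d) : `S` has a last element `sSup S`
    have hlt : sSup S < δ := (hS hmem).2
    have hslim : Order.IsSuccLimit (sSup S) := hlim _ (hS hmem).1
    have hS' : S ∩ Set.Iio (sSup S) ⊆ Sstar ∩ Set.Iio (sSup S) :=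
      fun x hx => ⟨(hS hx.1).1, hx.2⟩
    have hηs : η ∈ Ttree θ (sSup S) := ⟨hs', hη.2⟩
    have IHs := IH (sSup S) hlt η (S ∩ Set.Iio (sSup S)) hηs hS'
    rw [dif_pos hmem, dif_pos hlt]
    have key : ∀ Dcl : Node → Prop,
        (∀ ν : Node, sSup S ≤ ν.1 →
          (Dcl ν ↔ (succl (sSup S) →
            (ν.restrict (sSup S) ∈ limNodes θ (sSup S) (rst (sSup S)) →
              ∃ η' ∈ Λst (sSup S),
                ν.restrict (sSup S) ∈ limNodes θ (sSup S) (qst (sSup S) η'))))) →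
        {ν ∈ Ttree θ δ |
          (ν.1 < sSup S ∧
            ν ∈ pstar θ succl rst Λst qst (sSup S) η (S ∩ Set.Iio (sSup S))) ∨
          (sSup S ≤ ν.1 ∧
            ν.restrict (sSup S) ∈ limNodes θ (sSup S)
              (pstar θ succl rst Λst qst (sSup S) η (S ∩ Set.Iio (sSup S))) ∧ Dcl ν)} =
        {ν ∈ Ttree θ δ |
          Below ν η ∨ (Below η ν ∧ Cnd θ succl rst Λst qst ν S η)} := by
      intro Dcl hD
      ext ν
      simp only [Set.mem_setOf_eq, Set.mem_sep_iff]
      constructor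
      · rintro ⟨hT, ⟨hlt1, hmem1⟩ | ⟨hge, hlimm, hDν⟩⟩
        · rw [IHs] at hmem1
          refine ⟨hT, ?_⟩
          rcases hmem1.2 with hb | ⟨hb, hc⟩
          · exact Or.inl hb
          · refine Or.inr ⟨hb, fun δ₁ hδ₁ h1 h2 h3 h4 => ?_⟩
            by_cases hδs : δ₁ = sSup S
            · exfalso
              have h6 : δ₁ < sSup S := lt_of_le_of_lt h2 hlt1
              rw [hδs] at h6
              exact lt_irrefl _ h6
            · exact hc δ₁ ⟨hδ₁, lt_of_le_of_ne (le_csSup hbdd hδ₁) hδs⟩ h1 h2 h3 h4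
        · have hbel : Below η ν := by
            have h0 := hlimm.2.2 η.1 hs'
            rw [Node.restrict_restrict ν (le_of_lt hs')] at h0
            rw [IHs] at h0
            refine Node.below_of_restrict (min_eq_left (le_trans (le_of_lt hs') hge)) ?_
            rcases h0.2 with hb | ⟨hb, _⟩
            · exact Or.inl hb
            · exact Or.inr hb
          refine ⟨hT, Or.inr ⟨hbel, fun δ₁ hδ₁ h1 h2 h3 h4 => ?_⟩⟩
          by_cases hδs : δ₁ = sSup S
          · subst hδs
            exact (hD ν hge).1 hDν h3 h4
          · have hδ₁s : δ₁ < sSup S := lt_of_le_of_ne (le_csSup hbdd hδ₁) hδs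
            have hδ₁1 : δ₁ + 1 < sSup S := by
              rw [Ordinal.add_one_eq_succ]; exact hslim.succ_lt hδ₁s
            have h5 := hlimm.2.2 (δ₁ + 1) hδ₁1
            rw [Node.restrict_restrict ν (le_of_lt hδ₁1)] at h5
            rw [IHs] at h5
            have hν1 : (ν.restrict (δ₁ + 1)).1 = δ₁ + 1 := by
              rw [Node.restrict_fst]
              exact min_eq_left (le_trans (le_of_lt hδ₁1) hge)
            rcases h5.2 with hbb | ⟨_, hc⟩
            · exfalso
              have h6 : δ₁ + 1 ≤ η.1 := hν1 ▸ hbb.1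
              exact absurd h1 (not_lt.2 (le_trans (le_of_lt (lt_add_one δ₁)) h6))
            · have h6 := hc δ₁ ⟨hδ₁, hδ₁s⟩ h1
                (by rw [hν1]; exact le_of_lt (lt_add_one δ₁)) h3
              rw [Node.restrict_restrict ν (le_of_lt (lt_add_one δ₁))] at h6
              exact h6 h4
      · rintro ⟨hT, hcmp⟩
        rcases hcmp with hb | ⟨hb, hc⟩
        · refine ⟨hT, Or.inl ⟨lt_of_le_of_lt hb.1 hs', ?_⟩⟩
          rw [IHs]
          exact ⟨⟨lt_of_le_of_lt hb.1 hs', hT.2⟩, Or.inl hb⟩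
        · rcases lt_or_ge ν.1 (sSup S) with hνs | hνs
          · refine ⟨hT, Or.inl ⟨hνs, ?_⟩⟩
            rw [IHs]
            exact ⟨⟨hνs, hT.2⟩, Or.inr ⟨hb, fun δ₁ hδ₁ h1 h2 h3 h4 =>
              hc δ₁ hδ₁.1 h1 h2 h3 h4⟩⟩
          · refine ⟨hT, Or.inr ⟨hνs,
              ⟨by rw [Node.restrict_fst]; exact min_eq_left hνs,
                isSeq_restrict hT.2 _, fun β hβ => ?_⟩, ?_⟩⟩
            · rw [Node.restrict_restrict ν (le_of_lt hβ)]
              rw [IHs]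
              refine ⟨⟨by rw [Node.restrict_fst]; exact lt_of_le_of_lt (min_le_left _ _) hβ,
                isSeq_restrict hT.2 β⟩, ?_⟩
              by_cases hcase : min β ν.1 ≤ η.1
              · exact Or.inl (Node.restrict_below hb hcase)
              · have hηβ : η.1 ≤ β := le_of_lt (lt_of_lt_of_le (not_le.1 hcase) (min_le_left _ _))
                refine Or.inr ⟨Node.below_restrict_of_le hb hηβ,
                  fun δ₂ hδ₂ h1 h2 h3 h4 => ?_⟩
                rw [Node.restrict_fst] at h2
                rw [Node.restrict_restrict ν (h2.trans (min_le_left _ _))] at h4 ⊢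
                exact hc δ₂ hδ₂.1 h1 (h2.trans (min_le_right _ _)) h3 h4
            · exact (hD ν hνs).2 fun hsc hrst => hc (sSup S) hmem hs' hνs hsc hrst
    by_cases hsc : succl (sSup S)
    · rw [if_pos hsc]
      exact key (fun ν => ν.restrict (sSup S) ∈ limNodes θ (sSup S) (rst (sSup S)) →
          ∃ η' ∈ Λst (sSup S), ν.restrict (sSup S) ∈ limNodes θ (sSup S) (qst (sSup S) η'))
        (fun ν _ => by simp [hsc])
    · rw [if_neg hsc]
      have h2 := key (fun _ => True) (fun ν _ => by simp [hsc])
      rw [← h2]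
      ext ν
      simp only [Set.mem_setOf_eq, and_true]
  · -- case (b) : `S` unbounded above `lg η` with no last element
    rw [dif_neg hmem]
    have hne : S.Nonempty := by
      rcases Set.eq_empty_or_nonempty S with h | h
      · exfalso; rw [h] at hsup; simp at hsup
      · exact h
    ext ν
    simp only [Set.mem_setOf_eq, Set.mem_sep_iff]
    constructor
    · rintro ⟨hT, hb | ⟨hb, hD⟩⟩
      · exact ⟨hT, Or.inl hb⟩
      refine ⟨hT, Or.inr ⟨hb, ?_⟩⟩
      rcases hD with ⟨δ₁, hδ₁lt, hδ₁S, hνlt, hmem1⟩ | ⟨hνge, hall⟩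
      · rw [IH δ₁ hδ₁lt η _ ⟨lt_of_le_of_lt hb.1 hνlt, hη.2⟩
          (fun x hx => ⟨(hS hx.1).1, hx.2⟩)] at hmem1
        rcases hmem1.2 with h | ⟨_, hc⟩
        · intro δ₂ _ h1 h2 _ _
          exact absurd (h2.trans h.1) (not_le.2 h1)
        · intro δ₂ hδ₂ h1 h2 h3 h4
          exact hc δ₂ ⟨hδ₂, lt_of_le_of_lt h2 hνlt⟩ h1 h2 h3 h4
      · intro δ₁ hδ₁ h1 h2 h3 h4
        have hδ₁s : δ₁ < sSup S :=
          lt_of_le_of_ne (le_csSup hbdd hδ₁) (fun he => hmem (he ▸ hδ₁))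
        obtain ⟨δ₂, hδ₂S, hδ₁₂⟩ := exists_lt_of_lt_csSup hne hδ₁s
        have hδ₂lt : δ₂ < δ := (hS hδ₂S).2
        have hδ₁1 : δ₁ + 1 < δ₂ := by
          rw [Ordinal.add_one_eq_succ]; exact (hlim δ₂ (hS hδ₂S).1).succ_lt hδ₁₂
        have h5 := hall δ₂ hδ₂lt hδ₂S (lt_trans h1 hδ₁₂) (δ₁ + 1) hδ₁1
        rw [IH δ₂ hδ₂lt η _ ⟨lt_trans h1 hδ₁₂, hη.2⟩
          (fun x hx => ⟨(hS hx.1).1, hx.2⟩)] at h5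
        have hν1 : (ν.restrict (δ₁ + 1)).1 = δ₁ + 1 := by
          rw [Node.restrict_fst]
          refine min_eq_left ?_
          rw [Ordinal.add_one_eq_succ]
          exact Order.succ_le_of_lt (lt_of_lt_of_le hδ₁s hνge)
        rcases h5.2 with hbb | ⟨_, hc⟩
        · exfalso
          have h6 : δ₁ + 1 ≤ η.1 := hν1 ▸ hbb.1
          exact absurd h1 (not_lt.2 (le_trans (le_of_lt (lt_add_one δ₁)) h6))
        · have h6 := hc δ₁ ⟨hδ₁, hδ₁₂⟩ h1
            (by rw [hν1]; exact le_of_lt (lt_add_one δ₁)) h3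
          rw [Node.restrict_restrict ν (le_of_lt (lt_add_one δ₁))] at h6
          exact h6 h4
    · rintro ⟨hT, hb | ⟨hb, hc⟩⟩
      · exact ⟨hT, Or.inl hb⟩
      refine ⟨hT, Or.inr ⟨hb, ?_⟩⟩
      rcases lt_or_ge ν.1 (sSup S) with hνs | hνs
      · obtain ⟨δ₁, hδ₁S, hνδ₁⟩ := exists_lt_of_lt_csSup hne hνs
        refine Or.inl ⟨δ₁, (hS hδ₁S).2, hδ₁S, hνδ₁, ?_⟩
        rw [IH δ₁ (hS hδ₁S).2 η _ ⟨lt_of_le_of_lt hb.1 hνδ₁, hη.2⟩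
          (fun x hx => ⟨(hS hx.1).1, hx.2⟩)]
        exact ⟨⟨hνδ₁, hT.2⟩, Or.inr ⟨hb, fun δ₂ hδ₂ h1 h2 h3 h4 =>
          hc δ₂ hδ₂.1 h1 h2 h3 h4⟩⟩
      · refine Or.inr ⟨hνs, fun δ₁ hδ₁lt hδ₁S hηδ₁ ζ hζ => ?_⟩
        rw [IH δ₁ hδ₁lt η _ ⟨hηδ₁, hη.2⟩ (fun x hx => ⟨(hS hx.1).1, hx.2⟩)]
        refine ⟨⟨by rw [Node.restrict_fst]; exact lt_of_le_of_lt (min_le_left _ _) hζ,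
          isSeq_restrict hT.2 ζ⟩, ?_⟩
        by_cases hcase : min ζ ν.1 ≤ η.1
        · exact Or.inl (Node.restrict_below hb hcase)
        · have hηζ : η.1 ≤ ζ := le_of_lt (lt_of_lt_of_le (not_le.1 hcase) (min_le_left _ _))
          refine Or.inr ⟨Node.below_restrict_of_le hb hηζ,
            fun δ₂ hδ₂ h1 h2 h3 h4 => ?_⟩
          rw [Node.restrict_fst] at h2
          rw [Node.restrict_restrict ν (h2.trans (min_le_left _ _))] at h4 ⊢
          exact hc δ₂ hδ₂.1 h1 (h2.trans (min_le_right _ _)) h3 h4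

end Char


section Derived

open Node

variable {θ : Ordinal → Cardinal} {succl : Ordinal → Prop}
  {rst Λst : Ordinal → Set Node} {qst : Ordinal → Node → Set Node}
  {Sstar : Set Ordinal} {δ : Ordinal} {η : Node} {S : Set Ordinal}

theorem pstar_mem_iff (hlim : ∀ x ∈ Sstar, Order.IsSuccLimit x)
    (hη : η ∈ Ttree θ δ) (hS : S ⊆ Sstar ∩ Set.Iio δ) {ν : Node} :
    ν ∈ pstar θ succl rst Λst qst δ η S ↔
      ν ∈ Ttree θ δ ∧ (Below ν η ∨ (Below η ν ∧ Cnd θ succl rst Λst qst ν S η)) := by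
  rw [pstar_char hlim δ η S hη hS]
  rfl

theorem pstar_mem_self (hlim : ∀ x ∈ Sstar, Order.IsSuccLimit x)
    (hη : η ∈ Ttree θ δ) (hS : S ⊆ Sstar ∩ Set.Iio δ) :
    η ∈ pstar θ succl rst Λst qst δ η S :=
  (pstar_mem_iff hlim hη hS).2 ⟨hη, Or.inl (Node.below_refl η)⟩

theorem pstar_comparable (hlim : ∀ x ∈ Sstar, Order.IsSuccLimit x)
    (hη : η ∈ Ttree θ δ) (hS : S ⊆ Sstar ∩ Set.Iio δ) {ν : Node}
    (hν : ν ∈ pstar θ succl rst Λst qst δ η S) : Below ν η ∨ Below η ν := by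
  rcases ((pstar_mem_iff hlim hη hS).1 hν).2 with h | ⟨h, _⟩
  · exact Or.inl h
  · exact Or.inr h

theorem pstar_sub_Ttree (hlim : ∀ x ∈ Sstar, Order.IsSuccLimit x)
    (hη : η ∈ Ttree θ δ) (hS : S ⊆ Sstar ∩ Set.Iio δ) :
    pstar θ succl rst Λst qst δ η S ⊆ Ttree θ δ :=
  fun _ hν => ((pstar_mem_iff hlim hη hS).1 hν).1

theorem pstar_restrict_mem (hlim : ∀ x ∈ Sstar, Order.IsSuccLimit x)
    (hη : η ∈ Ttree θ δ) (hS : S ⊆ Sstar ∩ Set.Iio δ) {ν : Node}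
    (hν : ν ∈ pstar θ succl rst Λst qst δ η S) (β : Ordinal) :
    ν.restrict β ∈ pstar θ succl rst Λst qst δ η S := by
  rw [pstar_mem_iff hlim hη hS] at hν ⊢
  obtain ⟨hT, hd⟩ := hν
  refine ⟨⟨by rw [Node.restrict_fst]; exact lt_of_le_of_lt (min_le_right _ _) hT.1,
    isSeq_restrict hT.2 β⟩, ?_⟩
  rcases hd with hb | ⟨hb, hc⟩
  · exact Or.inl (Node.below_trans (Node.below_restrict ν β) hb)
  · by_cases hcase : min β ν.1 ≤ η.1
    · exact Or.inl (Node.restrict_below hb hcase)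
    · have hηβ : η.1 ≤ β := le_of_lt (lt_of_lt_of_le (not_le.1 hcase) (min_le_left _ _))
      refine Or.inr ⟨Node.below_restrict_of_le hb hηβ, fun δ₁ hδ₁ h1 h2 h3 h4 => ?_⟩
      rw [Node.restrict_fst] at h2
      rw [Node.restrict_restrict ν (h2.trans (min_le_left _ _))] at h4 ⊢
      exact hc δ₁ hδ₁ h1 (h2.trans (min_le_right _ _)) h3 h4

theorem pstar_ext_mem (hlim : ∀ x ∈ Sstar, Order.IsSuccLimit x) (hδl : Order.IsSuccLimit δ)
    (hη : η ∈ Ttree θ δ) (hS : S ⊆ Sstar ∩ Set.Iio δ) {j : Ordinal}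
    (hj : j < (θ η.1).ord) : η.ext j ∈ pstar θ succl rst Λst qst δ η S := by
  rw [pstar_mem_iff hlim hη hS]
  have hlg : (η.ext j).1 = η.1 + 1 := rfl
  have hlt : η.1 + 1 < δ := by rw [Ordinal.add_one_eq_succ]; exact hδl.succ_lt hη.1
  refine ⟨⟨by rw [hlg]; exact hlt, ?_, ?_⟩, Or.inr ⟨Node.below_ext η j, ?_⟩⟩
  · intro ε hε
    rw [hlg] at hε
    have hε' : ε ≤ η.1 := by
      rw [Ordinal.add_one_eq_succ] at hε; exact Order.le_of_lt_succ hε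
    show (if ε < η.1 then η.2 ε else if ε = η.1 then j else 0) < _
    rcases lt_or_eq_of_le hε' with h | h
    · rw [if_pos h]; exact hη.2.1 ε h
    · rw [if_neg (by rw [h]; exact lt_irrefl _), if_pos h, h]
      exact hj
  · intro ε hε
    rw [hlg] at hε
    have h1 : ¬ ε < η.1 := fun h => hε (lt_trans h (lt_add_one _))
    have h2 : ε ≠ η.1 := fun h => hε (by rw [h]; exact lt_add_one _)
    show (if ε < η.1 then η.2 ε else if ε = η.1 then j else 0) = 0
    rw [if_neg h1, if_neg h2]
  · intro δ₁ hδ₁ h1 h2 _ _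
    exfalso
    rw [hlg] at h2
    have he : δ₁ = η.1 + 1 := le_antisymm h2
      (by rw [Ordinal.add_one_eq_succ]; exact Order.succ_le_of_lt h1)
    have h5 := (hlim δ₁ (hS hδ₁).1).succ_lt h1
    rw [← Ordinal.add_one_eq_succ, he] at h5
    exact lt_irrefl _ h5

theorem pstar_isTrunk (hlim : ∀ x ∈ Sstar, Order.IsSuccLimit x) (hδl : Order.IsSuccLimit δ)
    (hθ : ∀ ε, 2 ≤ θ ε) (hη : η ∈ Ttree θ δ) (hS : S ⊆ Sstar ∩ Set.Iio δ) :
    IsTrunk (pstar θ succl rst Λst qst δ η S) η := by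
  refine ⟨pstar_mem_self hlim hη hS, fun ν hν => pstar_comparable hlim hη hS hν, ?_⟩
  intro η' hη' hcmp
  by_contra hnb
  rcases pstar_comparable hlim hη hS hη' with h | h
  · exact hnb h
  · have hlt : η.1 < η'.1 := by
      rcases lt_or_eq_of_le h.1 with h1 | h1
      · exact h1
      · exact absurd ⟨h1.ge, fun ε hε => (h.2 ε (by rw [h1]; exact hε)).symm⟩ hnb
    have hθ2 : (1:Ordinal) < (θ η.1).ord := by
      have h2 := Cardinal.ord_le_ord.2 (hθ η.1)
      have h3 : ((2:Cardinal)).ord = (2:Ordinal) := by simp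
      rw [h3] at h2
      exact lt_of_lt_of_le one_lt_two h2
    set j : Ordinal := if η'.2 η.1 = 0 then 1 else 0 with hjdef
    have hj : j < (θ η.1).ord := by
      rw [hjdef]
      by_cases h0 : η'.2 η.1 = 0
      · rw [if_pos h0]; exact hθ2
      · rw [if_neg h0]; exact lt_trans zero_lt_one hθ2
    have hne : j ≠ η'.2 η.1 := by
      rw [hjdef]
      by_cases h0 : η'.2 η.1 = 0
      · rw [if_pos h0, h0]; exact one_ne_zero
      · rw [if_neg h0]; exact fun he => h0 he.symm
    have hext := pstar_ext_mem (succl := succl) (rst := rst) (Λst := Λst) (qst := qst)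
      hlim hδl hη hS hj
    rcases hcmp _ hext with h' | h'
    · have hv := h'.2 η.1 (by rw [Node.ext_fst]; exact lt_add_one _)
      rw [Node.ext_snd_last] at hv
      exact hne hv
    · have hv := h'.2 η.1 hlt
      rw [Node.ext_snd_last] at hv
      exact hne hv.symm

theorem isTrunk_unique {p : Set Node} (hsub : p ⊆ Ttree θ δ) {t t' : Node}
    (h : IsTrunk p t) (h' : IsTrunk p t') : t = t' :=
  Node.below_antisymm (hsub h.1).2.2 (hsub h'.1).2.2
    (h'.2.2 t h.1 h.2.1) (h.2.2 t' h'.1 h'.2.1)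

theorem pstar_inter (hlim : ∀ x ∈ Sstar, Order.IsSuccLimit x) {η₁ η₂ : Node}
    {S₁ S₂ : Set Ordinal}
    (hη₁ : η₁ ∈ Ttree θ δ) (hη₂ : η₂ ∈ Ttree θ δ)
    (hS₁ : S₁ ⊆ Sstar ∩ Set.Iio δ) (hS₂ : S₂ ⊆ Sstar ∩ Set.Iio δ)
    (h12 : Below η₁ η₂) (htq : η₂ ∈ pstar θ succl rst Λst qst δ η₁ S₁) :
    pstar θ succl rst Λst qst δ η₁ S₁ ∩ pstar θ succl rst Λst qst δ η₂ S₂ =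
      pstar θ succl rst Λst qst δ η₂ (S₁ ∪ S₂) := by
  have hSu : S₁ ∪ S₂ ⊆ Sstar ∩ Set.Iio δ := Set.union_subset hS₁ hS₂
  have hC : Cnd θ succl rst Λst qst η₂ S₁ η₁ := by
    rw [pstar_mem_iff hlim hη₁ hS₁] at htq
    rcases htq.2 with h | h
    · intro δ₁ _ h1 h2 _ _
      exact absurd (h2.trans h.1) (not_le.2 h1)
    · exact h.2
  ext ν
  rw [Set.mem_inter_iff, pstar_mem_iff hlim hη₁ hS₁, pstar_mem_iff hlim hη₂ hS₂,
    pstar_mem_iff hlim hη₂ hSu]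
  constructor
  · rintro ⟨⟨hT, h1⟩, ⟨_, h2⟩⟩
    refine ⟨hT, ?_⟩
    rcases h2 with h2 | ⟨hb2, hc2⟩
    · exact Or.inl h2
    rcases h1 with h1 | ⟨hb1, hc1⟩
    · exact Or.inl (Node.below_trans h1 h12)
    refine Or.inr ⟨hb2, fun δ₁ hδ₁ hg1 hg2 hg3 hg4 => ?_⟩
    rcases hδ₁ with hδ₁ | hδ₁
    · exact hc1 δ₁ hδ₁ (lt_of_le_of_lt h12.1 hg1) hg2 hg3 hg4
    · exact hc2 δ₁ hδ₁ hg1 hg2 hg3 hg4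
  · rintro ⟨hT, h | ⟨hb, hc⟩⟩
    · refine ⟨⟨hT, ?_⟩, ⟨hT, Or.inl h⟩⟩
      rcases Node.below_or_below h h12 with h' | h'
      · exact Or.inl h'
      · refine Or.inr ⟨h', fun δ₁ hδ₁ hg1 hg2 hg3 hg4 => ?_⟩
        have he : ν.restrict δ₁ = η₂.restrict δ₁ :=
          Node.restrict_eq_of_below hT.2.2 h hg2
        rw [he] at hg4 ⊢
        exact hC δ₁ hδ₁ hg1 (hg2.trans h.1) hg3 hg4
    · refine ⟨⟨hT, Or.inr ⟨Node.below_trans h12 hb, fun δ₁ hδ₁ hg1 hg2 hg3 hg4 => ?_⟩⟩,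
        ⟨hT, Or.inr ⟨hb, fun δ₁ hδ₁ hg1 hg2 hg3 hg4 =>
          hc δ₁ (Or.inr hδ₁) hg1 hg2 hg3 hg4⟩⟩⟩
      rcases le_or_gt δ₁ η₂.1 with hle | hlt
      · have he : η₂.restrict δ₁ = ν.restrict δ₁ :=
          Node.restrict_eq_of_below hη₂.2.2 hb hle
        rw [← he] at hg4 ⊢
        exact hC δ₁ hδ₁ hg1 hle hg3 hg4
      · exact hc δ₁ (Or.inl hδ₁) hlt hg2 hg3 hg4

end Derived


theorem clubIn_inter {C₁ C₂ : Set Ordinal} {δ : Ordinal}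
    (hcof : Cardinal.aleph0 < δ.cof)
    (h₁ : ClubIn C₁ δ) (h₂ : ClubIn C₂ δ) : ClubIn (C₁ ∩ C₂) δ := by
  constructor
  · intro α hα
    have h₁' : ∀ x : Ordinal, ∃ y, x < δ → (y ∈ C₁ ∧ x < y ∧ y < δ) := by
      intro x
      by_cases hx : x < δ
      · obtain ⟨y, hyC, hy1, hy2⟩ := h₁.1 x hx
        exact ⟨y, fun _ => ⟨hyC, hy1, hy2⟩⟩
      · exact ⟨0, fun h => absurd h hx⟩
    have h₂' : ∀ x : Ordinal, ∃ y, x < δ → (y ∈ C₂ ∧ x < y ∧ y < δ) := by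
      intro x
      by_cases hx : x < δ
      · obtain ⟨y, hyC, hy1, hy2⟩ := h₂.1 x hx
        exact ⟨y, fun _ => ⟨hyC, hy1, hy2⟩⟩
      · exact ⟨0, fun h => absurd h hx⟩
    choose f₁ hf₁ using h₁'
    choose f₂ hf₂ using h₂'
    set g : ℕ → Ordinal := fun n => Nat.rec (f₁ α) (fun n x => if n % 2 = 0 then f₂ x else f₁ x) n with hg
    have hg0 : g 0 = f₁ α := rfl
    have hgs : ∀ n, g (n + 1) = if n % 2 = 0 then f₂ (g n) else f₁ (g n) := fun n => rfl
    have key : ∀ n, g n < δ ∧ g n < g (n + 1) ∧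
        (if n % 2 = 0 then g (n+1) ∈ C₂ else g (n+1) ∈ C₁) := by
      intro n
      induction n with
      | zero =>
        have h0 : g 0 < δ := by rw [hg0]; exact (hf₁ α hα).2.2
        have h1 := hf₂ (g 0) h0
        refine ⟨h0, ?_, ?_⟩
        · rw [hgs 0, if_pos rfl]; exact h1.2.1
        · rw [if_pos rfl, hgs 0, if_pos rfl]; exact h1.1
      | succ n ih =>
        have hlt : g (n + 1) < δ := by
          rw [hgs n]
          by_cases hp : n % 2 = 0
          · rw [if_pos hp]; exact (hf₂ (g n) ih.1).2.2
          · rw [if_neg hp]; exact (hf₁ (g n) ih.1).2.2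
        refine ⟨hlt, ?_, ?_⟩
        · rw [hgs (n+1)]
          by_cases hp : (n+1) % 2 = 0
          · rw [if_pos hp]; exact (hf₂ (g (n+1)) hlt).2.1
          · rw [if_neg hp]; exact (hf₁ (g (n+1)) hlt).2.1
        · rw [hgs (n+1)]
          by_cases hp : (n+1) % 2 = 0
          · rw [if_pos hp, if_pos hp]; exact (hf₂ (g (n+1)) hlt).1
          · rw [if_neg hp, if_neg hp]; exact (hf₁ (g (n+1)) hlt).1
    have hmono : StrictMono g := strictMono_nat_of_lt_succ (fun n => (key n).2.1)
    set β : Ordinal := ⨆ n, g n with hβ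
    have hβδ : β < δ := by
      rw [hβ]
      exact Ordinal.iSup_lt_ord_lift (by simpa using hcof) (fun n => (key n).1)
    have hlt : ∀ n, g n < β := by
      intro n
      rw [hβ]
      exact lt_of_lt_of_le ((key n).2.1) (le_ciSup (Ordinal.bddAbove_range g) (n+1))
    have hex : ∀ β' < β, ∃ n, β' < g n := by
      intro β' hβ'
      by_contra hcon
      push_neg at hcon
      rw [hβ] at hβ'
      exact hβ'.not_ge (Ordinal.iSup_le hcon)
    have hmem1 : ∀ n, g (2*n + 2) ∈ C₁ := by
      intro n
      have hp : ¬ (2*n + 1) % 2 = 0 := by omega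
      have h5 := (key (2*n+1)).2.2
      rw [if_neg hp] at h5
      exact h5
    have hmem2 : ∀ n, g (2*n + 1) ∈ C₂ := by
      intro n
      have hp : (2*n) % 2 = 0 := by omega
      have h5 := (key (2*n)).2.2
      rw [if_pos hp] at h5
      exact h5
    have hβC₁ : β ∈ C₁ := by
      refine h₁.2 β (lt_of_le_of_lt (by simp) (hlt 0)) hβδ ?_
      intro β' hβ'
      obtain ⟨n, hn⟩ := hex β' hβ'
      exact ⟨g (2*n + 2), hmem1 n, lt_of_lt_of_le hn (hmono.le_iff_le.2 (show n ≤ 2*n+2 by omega)), hlt (2*n+2)⟩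
    have hβC₂ : β ∈ C₂ := by
      refine h₂.2 β (lt_of_le_of_lt (by simp) (hlt 0)) hβδ ?_
      intro β' hβ'
      obtain ⟨n, hn⟩ := hex β' hβ'
      exact ⟨g (2*n + 1), hmem2 n, lt_of_lt_of_le hn (hmono.le_iff_le.2 (show n ≤ 2*n+1 by omega)), hlt (2*n+1)⟩
    exact ⟨β, ⟨hβC₁, hβC₂⟩, lt_trans (hf₁ α hα).2.1 (by rw [← hg0]; exact hlt 0), hβδ⟩
  · intro α hα0 hαδ happ
    constructor
    · exact h₁.2 α hα0 hαδ (fun β hβ => by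
        obtain ⟨γ, hγ, h5, h6⟩ := happ β hβ; exact ⟨γ, hγ.1, h5, h6⟩)
    · exact h₂.2 α hα0 hαδ (fun β hβ => by
        obtain ⟨γ, hγ, h5, h6⟩ := happ β hβ; exact ⟨γ, hγ.2, h5, h6⟩)

theorem tenuous_union {S₁ S₂ : Set Ordinal} (h₁ : Tenuous S₁) (h₂ : Tenuous S₂) :
    Tenuous (S₁ ∪ S₂) := by
  intro δ hδ hstat
  obtain ⟨C₁, hC₁, hC₁e⟩ : ∃ C, ClubIn C δ ∧ ¬((S₁ ∩ Set.Iio δ) ∩ C).Nonempty := by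
    by_contra h
    push_neg at h
    exact h₁ δ hδ h
  obtain ⟨C₂, hC₂, hC₂e⟩ : ∃ C, ClubIn C δ ∧ ¬((S₂ ∩ Set.Iio δ) ∩ C).Nonempty := by
    by_contra h
    push_neg at h
    exact h₂ δ hδ h
  obtain ⟨x, hxS, hxC⟩ := hstat (C₁ ∩ C₂) (clubIn_inter hδ hC₁ hC₂)
  rcases hxS.1 with hx | hx
  · exact hC₁e ⟨x, ⟨hx, hxS.2⟩, hxC.1⟩
  · exact hC₂e ⟨x, ⟨hx, hxS.2⟩, hxC.2⟩


section TrunkMem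

open Node

variable {θ : Ordinal → Cardinal} {succl : Ordinal → Prop}
  {rst Λst : Ordinal → Set Node} {qst : Ordinal → Node → Set Node}
  {Sstar : Set Ordinal} {δ : Ordinal}

theorem pstar_trunk_mem_of_subset (hlim : ∀ x ∈ Sstar, Order.IsSuccLimit x)
    (hδl : Order.IsSuccLimit δ) (hθ : ∀ ε, 2 ≤ θ ε)
    {ηp ηr : Node} {Sp Sr : Set Ordinal}
    (hηp : ηp ∈ Ttree θ δ) (hηr : ηr ∈ Ttree θ δ)
    (hSp : Sp ⊆ Sstar ∩ Set.Iio δ) (hSr : Sr ⊆ Sstar ∩ Set.Iio δ)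
    (hsub : pstar θ succl rst Λst qst δ ηr Sr ⊆ pstar θ succl rst Λst qst δ ηp Sp) :
    ηp ∈ pstar θ succl rst Λst qst δ ηr Sr := by
  have hηrp := hsub (pstar_mem_self hlim hηr hSr)
  have hbel : Node.Below ηp ηr := by
    rcases pstar_comparable hlim hηp hSp hηrp with h | h
    swap
    · exact h
    by_contra hnb
    have hlt : ηr.1 < ηp.1 := by
      rcases lt_or_eq_of_le h.1 with h1 | h1
      · exact h1
      · exact absurd ⟨h1.ge, fun ε hε => (h.2 ε (by rw [h1]; exact hε)).symm⟩ hnb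
    have hθ2 : (1:Ordinal) < (θ ηr.1).ord := by
      have h2 := Cardinal.ord_le_ord.2 (hθ ηr.1)
      have h3 : ((2:Cardinal)).ord = (2:Ordinal) := by simp
      rw [h3] at h2
      exact lt_of_lt_of_le one_lt_two h2
    set j : Ordinal := if ηp.2 ηr.1 = 0 then 1 else 0 with hjdef
    have hj : j < (θ ηr.1).ord := by
      rw [hjdef]
      by_cases h0 : ηp.2 ηr.1 = 0
      · rw [if_pos h0]; exact hθ2
      · rw [if_neg h0]; exact lt_trans zero_lt_one hθ2
    have hne : j ≠ ηp.2 ηr.1 := by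
      rw [hjdef]
      by_cases h0 : ηp.2 ηr.1 = 0
      · rw [if_pos h0, h0]; exact one_ne_zero
      · rw [if_neg h0]; exact fun he => h0 he.symm
    have hext := pstar_ext_mem (succl := succl) (rst := rst) (Λst := Λst) (qst := qst)
      hlim hδl hηr hSr hj
    rcases pstar_comparable hlim hηp hSp (hsub hext) with h' | h'
    · have hv := h'.2 ηr.1 (by rw [Node.ext_fst]; exact lt_add_one _)
      rw [Node.ext_snd_last] at hv
      exact hne hv
    · have hv := h'.2 ηr.1 hlt
      rw [Node.ext_snd_last] at hv
      exact hne hv.symm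
  rw [Node.eq_restrict hηp.2.2 hbel]
  exact pstar_restrict_mem hlim hηr hSr (pstar_mem_self hlim hηr hSr) ηp.1

end TrunkMem

/-- for `p = p*_{η₁,δ,S₁}`, `q = p*_{η₂,δ,S₂}` with
`η₁ ⊴ η₂`, `tr(p) ∈ q` and `tr(q) ∈ p`, one has
`p ∩ q = p*_{η₂,δ,S₁∪S₂} ∈ Q_δ`; in particular two conditions of `Q_δ`
are compatible iff each one's trunk belongs to the other. -/
theorem stmt16 (lamc : Cardinal) (hinacc : lamc.IsInaccessible)
    (θ : Ordinal → Cardinal) (hθ : ∀ ε, 2 ≤ θ ε)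
    (hθlt : ∀ ε < lamc.ord, (θ ε).ord < lamc.ord)
    (Sstar : Set Ordinal) (hSsub : Sstar ⊆ Set.Iio lamc.ord)
    (hSstat : StatIn Sstar lamc.ord)
    (hSsl : ∀ δ ∈ Sstar, (Ordinal.card δ).IsStrongLimit ∧ (Ordinal.card δ).ord = δ)
    (hSθ : ∀ δ ∈ Sstar, ∀ ζ < δ, (θ ζ).ord < δ)
    (hrefl : ∀ ε < lamc.ord, StatIn (Sstar ∩ Set.Iio ε) ε →
      (Ordinal.card ε).IsInaccessible)
    (succl : Ordinal → Prop) (rst Λst : Ordinal → Set Node)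
    (qst : Ordinal → Node → Set Node)
    (hsucc : ∀ δ₁, succl δ₁ → IsXi θ Sstar δ₁ (Λst δ₁) (qst δ₁) ∧
      rst δ₁ = ⋃ η ∈ Λst δ₁, qst δ₁ η)
    (δ : Ordinal) (hδ : δ ∈ Sstar ∨ δ = lamc.ord)
    (η₁ η₂ : Node) (hη₁ : η₁ ∈ Ttree θ δ) (hη₂ : η₂ ∈ Ttree θ δ)
    (S₁ S₂ : Set Ordinal) (hS₁ : S₁ ⊆ Sstar ∩ Set.Iio δ) (hten₁ : Tenuous S₁)
    (hS₂ : S₂ ⊆ Sstar ∩ Set.Iio δ) (hten₂ : Tenuous S₂)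
    (h12 : Node.Below η₁ η₂)
    (htp : η₁ ∈ pstar θ succl rst Λst qst δ η₂ S₂)
    (htq : η₂ ∈ pstar θ succl rst Λst qst δ η₁ S₁) :
    (pstar θ succl rst Λst qst δ η₁ S₁ ∩ pstar θ succl rst Λst qst δ η₂ S₂ =
      pstar θ succl rst Λst qst δ η₂ (S₁ ∪ S₂)) ∧
    IsCondQ θ succl rst Λst qst Sstar δ
      (pstar θ succl rst Λst qst δ η₁ S₁ ∩ pstar θ succl rst Λst qst δ η₂ S₂) ∧
    (∀ p q, IsCondQ θ succl rst Λst qst Sstar δ p →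
      IsCondQ θ succl rst Λst qst Sstar δ q →
      ((∃ r, IsCondQ θ succl rst Λst qst Sstar δ r ∧ r ⊆ p ∧ r ⊆ q) ↔
        (∀ tp, IsTrunk p tp → tp ∈ q) ∧ (∀ tq, IsTrunk q tq → tq ∈ p))) := by
  have hlim : ∀ x ∈ Sstar, Order.IsSuccLimit x := by
    intro x hx
    obtain ⟨h1, h2⟩ := hSsl x hx
    have h3 := Cardinal.isSuccLimit_ord h1.aleph0_le
    rw [h2] at h3
    exact h3
  have hδlim : Order.IsSuccLimit δ := by
    rcases hδ with h | h
    · exact hlim δ h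
    · rw [h]; exact Cardinal.isSuccLimit_ord (le_of_lt hinacc.1)
  have heq := pstar_inter hlim hη₁ hη₂ hS₁ hS₂ h12 htq
  refine ⟨heq, ?_, ?_⟩
  · rw [heq]
    exact ⟨η₂, hη₂, S₁ ∪ S₂, Set.union_subset hS₁ hS₂, tenuous_union hten₁ hten₂, rfl⟩
  · intro p q hp hq
    obtain ⟨ηp, hηp, Sp, hSp, htenp, rfl⟩ := hp
    obtain ⟨ηq, hηq, Sq, hSq, htenq, rfl⟩ := hq
    constructor
    · rintro ⟨r, hr, hrp, hrq⟩
      obtain ⟨ηr, hηr, Sr, hSr, htenr, rfl⟩ := hr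
      constructor
      · intro tp htp
        have htr := pstar_isTrunk (succl := succl) (rst := rst) (Λst := Λst) (qst := qst)
          hlim hδlim hθ hηp hSp
        rw [isTrunk_unique (pstar_sub_Ttree hlim hηp hSp) htp htr]
        exact hrq (pstar_trunk_mem_of_subset hlim hδlim hθ hηp hηr hSp hSr hrp)
      · intro tq htq'
        have htr := pstar_isTrunk (succl := succl) (rst := rst) (Λst := Λst) (qst := qst)
          hlim hδlim hθ hηq hSq
        rw [isTrunk_unique (pstar_sub_Ttree hlim hηq hSq) htq' htr]
        exact hrp (pstar_trunk_mem_of_subset hlim hδlim hθ hηq hηr hSq hSr hrq)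
    · rintro ⟨h1, h2⟩
      have htrp := pstar_isTrunk (succl := succl) (rst := rst) (Λst := Λst) (qst := qst)
        hlim hδlim hθ hηp hSp
      have htrq := pstar_isTrunk (succl := succl) (rst := rst) (Λst := Λst) (qst := qst)
        hlim hδlim hθ hηq hSq
      have hm1 : ηp ∈ pstar θ succl rst Λst qst δ ηq Sq := h1 ηp htrp
      have hm2 : ηq ∈ pstar θ succl rst Λst qst δ ηp Sp := h2 ηq htrq
      rcases pstar_comparable hlim hηq hSq hm1 with h | h
      · refine ⟨pstar θ succl rst Λst qst δ ηq (Sp ∪ Sq),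
          ⟨ηq, hηq, Sp ∪ Sq, Set.union_subset hSp hSq,
            tenuous_union htenp htenq, rfl⟩, ?_, ?_⟩
        · rw [← pstar_inter hlim hηp hηq hSp hSq h hm2]
          exact Set.inter_subset_left
        · rw [← pstar_inter hlim hηp hηq hSp hSq h hm2]
          exact Set.inter_subset_right
      · refine ⟨pstar θ succl rst Λst qst δ ηp (Sq ∪ Sp),
          ⟨ηp, hηp, Sq ∪ Sp, Set.union_subset hSq hSp,
            tenuous_union htenq htenp, rfl⟩, ?_, ?_⟩
        · rw [← pstar_inter hlim hηq hηp hSq hSp h hm1]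
          exact Set.inter_subset_right
        · rw [← pstar_inter hlim hηq hηp hSq hSp h hm1]
          exact Set.inter_subset_left


end RRF
end
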